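/- arXiv:1508.03814 — 3 statements merged into one kernel-verified Lean document; each statement's English description precedes it below -/
import Mathlib

section
/- Let p be a prime, let Γ ⊊ F_p^* be a proper multiplicative subgroup, and let A, B ⊆ F_p be two sets such that A + B ⊆ Γ ∪ {0}. Then |A| · |B| < 4p. -/
open Finset Pointwise

/-- `A` is a multiplicative subgroup of `F_p^*`. -/
def MulSubgroup {p : ℕ} (A : Finset (ZMod p)) : Prop :=
  (0 : ZMod p) ∉ A ∧ (1 : ZMod p) ∈ A ∧ ∀ x ∈ A, ∀ y ∈ A, x * y⁻¹ ∈ A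

open Complex in
/-- There is a nontrivial multiplicative character trivial on a proper subgroup `Γ`. -/
lemma exists_char (p : ℕ) [Fact p.Prime] (Γ : Finset (ZMod p))
    (hΓ : MulSubgroup Γ) (hproper : Γ ⊂ Finset.univ \ {0}) :
    ∃ χ : MulChar (ZMod p) ℂ, χ ≠ 1 ∧ ∀ γ ∈ Γ, χ γ = 1 := by
  obtain ⟨h0, h1, hdiv⟩ := hΓ
  have hinv : ∀ y ∈ Γ, y⁻¹ ∈ Γ := fun y hy => by simpa using hdiv 1 h1 y hy
  have hmul : ∀ x ∈ Γ, ∀ y ∈ Γ, x * y ∈ Γ := fun x hx y hy => by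
    simpa using hdiv x hx y⁻¹ (hinv y hy)
  set H : Subgroup (ZMod p)ˣ :=
    { carrier := {u | (u : ZMod p) ∈ Γ}
      one_mem' := by simpa using h1
      mul_mem' := fun {a b} ha hb => by
        simp only [Set.mem_setOf_eq, Units.val_mul] at *
        exact hmul _ ha _ hb
      inv_mem' := fun {a} ha => by
        simp only [Set.mem_setOf_eq] at *
        rw [Units.val_inv_eq_inv_val]
        exact hinv _ ha } with hH
  obtain ⟨x, hxmem, hxΓ⟩ := Finset.exists_of_ssubset hproper
  have hx0 : x ≠ 0 := by
    simp only [Finset.mem_sdiff, Finset.mem_singleton] at hxmem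
    exact hxmem.2
  have hxu : IsUnit x := hx0.isUnit
  set Q := (ZMod p)ˣ ⧸ H with hQ
  haveI : IsCyclic Q := isCyclic_of_surjective (QuotientGroup.mk' H)
    (QuotientGroup.mk'_surjective H)
  have hcard : (Nat.card Q) ≠ 0 := Nat.card_pos.ne'
  have hζ := Complex.isPrimitiveRoot_exp (Nat.card Q) hcard
  have hne1 : (QuotientGroup.mk' H) hxu.unit ≠ 1 := by
    rw [Ne, QuotientGroup.mk'_apply, QuotientGroup.eq_one_iff]
    simpa [hH] using hxΓ
  obtain ⟨φ, hφ⟩ := IsCyclic.exists_apply_ne_one (G := Q) (G' := ℂˣ)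
    ⟨(hζ.isUnit hcard).unit, hζ.isUnit_unit hcard⟩ hne1
  refine ⟨MulChar.ofUnitHom (φ.comp (QuotientGroup.mk' H)), ?_, ?_⟩
  · intro h
    apply hφ
    have h2 := MulChar.ofUnitHom_coe (φ.comp (QuotientGroup.mk' H)) hxu.unit
    rw [h, MulChar.one_apply_coe] at h2
    exact Units.ext h2.symm
  · intro γ hγ
    have hγ0 : γ ≠ 0 := fun h => h0 (h ▸ hγ)
    have hγu : IsUnit γ := hγ0.isUnit
    have hmem : hγu.unit ∈ H := by simpa [hH] using hγ
    have := MulChar.ofUnitHom_coe (φ.comp (QuotientGroup.mk' H)) hγu.unit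
    rw [hγu.unit_spec] at this
    have hone : (QuotientGroup.mk' H) hγu.unit = 1 := (QuotientGroup.eq_one_iff _).mpr hmem
    rw [this, MonoidHom.comp_apply, hone, map_one, Units.val_one]

open Complex in
/-- The complete shifted character sum. -/
lemma shift_sum (p : ℕ) [Fact p.Prime] (χ : MulChar (ZMod p) ℂ) (hχ : χ ≠ 1)
    {c : ZMod p} (hc : c ≠ 0) :
    ∑ y : ZMod p, χ (y + c) * (starRingEnd ℂ) (χ y) = -1 := by
  have hconj : ∀ y : ZMod p, (starRingEnd ℂ) (χ y) = χ y⁻¹ := fun y => by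
    rw [show (starRingEnd ℂ) (χ y) = star (χ y) from rfl, MulChar.star_apply',
      MulChar.inv_apply']
  have h1 : ∀ y : ZMod p, χ (y + c) * (starRingEnd ℂ) (χ y) = χ ((y + c) * y⁻¹) := by
    intro y
    rw [hconj, map_mul]
  simp_rw [h1]
  rw [← Finset.sum_erase_add Finset.univ (fun y : ZMod p => χ ((y + c) * y⁻¹))
    (Finset.mem_univ (0 : ZMod p))]
  have h0 : χ (((0 : ZMod p) + c) * (0 : ZMod p)⁻¹) = 0 := by
    rw [inv_zero, mul_zero, MulChar.map_zero]
  rw [h0, add_zero]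
  have hbij : ∑ y ∈ Finset.univ.erase (0 : ZMod p), χ ((y + c) * y⁻¹)
      = ∑ w ∈ Finset.univ.erase (1 : ZMod p), χ w := by
    refine Finset.sum_nbij' (fun y => 1 + c * y⁻¹) (fun w => c * (w - 1)⁻¹) ?_ ?_ ?_ ?_ ?_
    · intro y hy
      have hy0 : y ≠ 0 := Finset.ne_of_mem_erase hy
      simp only [Finset.mem_erase, Finset.mem_univ, and_true]
      intro h
      have : c * y⁻¹ = 0 := by linear_combination h
      rcases mul_eq_zero.mp this with h' | h'
      · exact hc h'
      · exact hy0 (inv_eq_zero.mp h')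
    · intro w hw
      have hw1 : w ≠ 1 := Finset.ne_of_mem_erase hw
      simp only [Finset.mem_erase, Finset.mem_univ, and_true]
      intro h
      rcases mul_eq_zero.mp h with h' | h'
      · exact hc h'
      · exact hw1 (by
          have := inv_eq_zero.mp h'
          linear_combination this)
    · intro y hy
      have hy0 : y ≠ 0 := Finset.ne_of_mem_erase hy
      field_simp
      rw [show y + c - y = c by ring, div_self hc]
    · intro w hw
      have hw1 : w ≠ 1 := Finset.ne_of_mem_erase hw
      have : w - 1 ≠ 0 := sub_ne_zero.mpr hw1
      field_simp
      ring
    · intro y hy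
      have hy0 : y ≠ 0 := Finset.ne_of_mem_erase hy
      congr 1
      field_simp
  rw [hbij]
  have := Finset.sum_erase_add Finset.univ (fun w => χ w) (Finset.mem_univ (1 : ZMod p))
  rw [MulChar.sum_eq_zero_of_ne_one hχ] at this
  have h1' : χ (1 : ZMod p) = 1 := χ.map_one
  linear_combination this - h1'

theorem stmt_3 (p : ℕ) [Fact p.Prime] (Γ A B : Finset (ZMod p))
    (hΓ : MulSubgroup Γ) (hproper : Γ ⊂ Finset.univ \ {0})
    (hAB : A + B ⊆ Γ ∪ {0}) :
    A.card * B.card < 4 * p := by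
  have hp : p.Prime := Fact.out
  have hp2 : 2 ≤ p := hp.two_le
  rcases A.eq_empty_or_nonempty with rfl | hA
  · simp; omega
  rcases B.eq_empty_or_nonempty with rfl | hB
  · simp; omega
  obtain ⟨χ, hχ, hχΓ⟩ := exists_char p Γ hΓ hproper
  classical
  set N1 : ℕ := ∑ a ∈ A, ∑ b ∈ B, if a + b ∈ Γ then 1 else 0 with hN1
  set N0 : ℕ := ∑ a ∈ A, ∑ b ∈ B, if a + b = 0 then 1 else 0 with hN0
  -- membership dichotomy
  have hdich : ∀ a ∈ A, ∀ b ∈ B, (a + b ∈ Γ ∧ a + b ≠ 0) ∨ (a + b ∉ Γ ∧ a + b = 0) := by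
    intro a ha b hb
    have := hAB (Finset.add_mem_add ha hb)
    rw [Finset.mem_union, Finset.mem_singleton] at this
    rcases this with h | h
    · exact Or.inl ⟨h, fun h0 => hΓ.1 (by rwa [h0] at h)⟩
    · exact Or.inr ⟨fun hg => hΓ.1 (by rwa [h] at hg), h⟩
  -- N1 + N0 = |A| * |B|
  have hsplit : N1 + N0 = A.card * B.card := by
    rw [hN1, hN0, ← Finset.sum_add_distrib]
    have : ∀ a ∈ A, ((∑ b ∈ B, if a + b ∈ Γ then 1 else 0)
        + ∑ b ∈ B, if a + b = 0 then 1 else 0) = B.card := by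
      intro a ha
      rw [← Finset.sum_add_distrib]
      rw [show (B.card : ℕ) = ∑ _b ∈ B, 1 by simp]
      refine Finset.sum_congr rfl fun b hb => ?_
      rcases hdich a ha b hb with ⟨h1, h2⟩ | ⟨h1, h2⟩ <;> simp [h1, h2, hΓ.1]
    rw [Finset.sum_congr rfl this]
    simp [mul_comm]
  -- N0 ≤ |A| and N0 ≤ |B|
  have hN0A : N0 ≤ A.card := by
    rw [hN0]
    calc ∑ a ∈ A, ∑ b ∈ B, (if a + b = 0 then 1 else 0)
        ≤ ∑ _a ∈ A, 1 := by
          refine Finset.sum_le_sum fun a _ => ?_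
          have : ∀ b, a + b = 0 ↔ b = -a := fun b => by constructor <;> intro h <;> linear_combination h
          simp_rw [this]
          rw [Finset.sum_ite_eq' B (-a) (fun _ => 1)]
          split <;> simp
      _ = A.card := by simp
  have hN0B : N0 ≤ B.card := by
    rw [hN0, Finset.sum_comm]
    calc ∑ b ∈ B, ∑ a ∈ A, (if a + b = 0 then 1 else 0)
        ≤ ∑ _b ∈ B, 1 := by
          refine Finset.sum_le_sum fun b _ => ?_
          have : ∀ a, a + b = 0 ↔ a = -b := fun a => by constructor <;> intro h <;> linear_combination h
          simp_rw [this]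
          rw [Finset.sum_ite_eq' A (-b) (fun _ => 1)]
          split <;> simp
      _ = B.card := by simp
  -- the character sum
  set f : ZMod p → ℂ := fun x => ∑ b ∈ B, χ (x + b) with hf
  have hS : ∑ a ∈ A, f a = (N1 : ℂ) := by
    rw [hN1]
    push_cast
    refine Finset.sum_congr rfl fun a ha => ?_
    refine Finset.sum_congr rfl fun b hb => ?_
    rcases hdich a ha b hb with ⟨h1, _⟩ | ⟨_, h2⟩
    · rw [hχΓ _ h1, if_pos h1]
    · rw [h2, MulChar.map_zero, if_neg hΓ.1]
  -- second moment computation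
  have hT0 : ∑ y : ZMod p, χ (y + 0) * (starRingEnd ℂ) (χ y) = (p : ℂ) - 1 := by
    have hterm : ∀ y : ZMod p, χ (y + 0) * (starRingEnd ℂ) (χ y)
        = if y = 0 then 0 else 1 := by
      intro y
      rcases eq_or_ne y 0 with rfl | hy
      · simp [MulChar.map_zero]
      · rw [if_neg hy, add_zero]
        rw [show (starRingEnd ℂ) (χ y) = star (χ y) from rfl, MulChar.star_apply',
          MulChar.inv_apply', ← map_mul, mul_inv_cancel₀ hy, χ.map_one]
    simp_rw [hterm]
    rw [← Finset.sum_erase_add Finset.univ (fun y : ZMod p => if y = 0 then (0 : ℂ) else 1)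
      (Finset.mem_univ (0 : ZMod p))]
    rw [if_pos rfl, add_zero]
    have he : ∀ y ∈ Finset.univ.erase (0 : ZMod p), (if y = 0 then (0 : ℂ) else 1) = 1 :=
      fun y hy => if_neg (Finset.ne_of_mem_erase hy)
    rw [Finset.sum_congr rfl he, Finset.sum_const, Finset.card_erase_of_mem (Finset.mem_univ _),
      Finset.card_univ, ZMod.card, nsmul_eq_mul, mul_one, Nat.cast_sub hp.one_lt.le,
      Nat.cast_one]
  have hsecond : ∑ x : ZMod p, f x * (starRingEnd ℂ) (f x)
      = (B.card : ℂ) * ((p : ℂ) - B.card) := by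
    have expand : ∀ x : ZMod p, f x * (starRingEnd ℂ) (f x)
        = ∑ b ∈ B, ∑ b' ∈ B, χ (x + b) * (starRingEnd ℂ) (χ (x + b')) := by
      intro x
      rw [hf]
      simp only
      rw [map_sum, Finset.sum_mul_sum]
    simp_rw [expand]
    rw [Finset.sum_comm]
    have hinner : ∀ b ∈ B, ∑ x : ZMod p, ∑ b' ∈ B, χ (x + b) * (starRingEnd ℂ) (χ (x + b'))
        = (p : ℂ) - B.card := by
      intro b hb
      rw [Finset.sum_comm]
      have hshift : ∀ b' : ZMod p, ∑ x : ZMod p, χ (x + b) * (starRingEnd ℂ) (χ (x + b'))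
          = ∑ y : ZMod p, χ (y + (b - b')) * (starRingEnd ℂ) (χ y) := by
        intro b'
        refine Fintype.sum_equiv (Equiv.addRight b') _ _ fun x => ?_
        simp only [Equiv.coe_addRight]
        congr 2
        ring
      simp_rw [hshift]
      have := Finset.sum_erase_add B
        (fun b' => ∑ y : ZMod p, χ (y + (b - b')) * (starRingEnd ℂ) (χ y)) hb
      rw [← this]
      simp only [sub_self, hT0]
      have herase : ∀ b' ∈ B.erase b,
          ∑ y : ZMod p, χ (y + (b - b')) * (starRingEnd ℂ) (χ y) = -1 := by
        intro b' hb'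
        exact shift_sum p χ hχ (sub_ne_zero.mpr (Finset.ne_of_mem_erase hb').symm)
      rw [Finset.sum_congr rfl herase, Finset.sum_const, Finset.card_erase_of_mem hb]
      have hB1 : 1 ≤ B.card := Finset.card_pos.mpr hB
      rw [nsmul_eq_mul, Nat.cast_sub hB1]
      push_cast
      ring
    rw [Finset.sum_congr rfl hinner, Finset.sum_const]
    push_cast
    ring
  -- now transfer to real inequalities
  have hnormsum : ∑ x : ZMod p, ‖f x‖ ^ 2 ≤ (p : ℝ) * B.card := by
    have hre : ∑ x : ZMod p, f x * (starRingEnd ℂ) (f x)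
        = ((∑ x : ZMod p, ‖f x‖ ^ 2 : ℝ) : ℂ) := by
      push_cast
      refine Finset.sum_congr rfl fun x _ => ?_
      rw [RCLike.mul_conj]
      norm_cast
    have hrs : (∑ x : ZMod p, ‖f x‖ ^ 2 : ℝ) = (B.card : ℝ) * ((p : ℝ) - B.card) := by
      have h := hre.symm.trans hsecond
      exact_mod_cast h
    rw [hrs]
    nlinarith [Nat.cast_nonneg (α := ℝ) B.card, sq_nonneg ((B.card : ℝ))]
  -- Cauchy-Schwarz
  have hCS : ((N1 : ℝ)) ^ 2 ≤ (A.card : ℝ) * ((p : ℝ) * B.card) := by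
    have h1 : (N1 : ℝ) ≤ ∑ a ∈ A, ‖f a‖ := by
      have : ‖∑ a ∈ A, f a‖ ≤ ∑ a ∈ A, ‖f a‖ := norm_sum_le _ _
      rw [hS] at this
      simpa using this
    have h2 : (∑ a ∈ A, ‖f a‖) ^ 2 ≤ (A.card : ℝ) * ∑ a ∈ A, ‖f a‖ ^ 2 :=
      sq_sum_le_card_mul_sum_sq
    have h3 : ∑ a ∈ A, ‖f a‖ ^ 2 ≤ ∑ x : ZMod p, ‖f x‖ ^ 2 :=
      Finset.sum_le_sum_of_subset_of_nonneg (Finset.subset_univ A)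
        (fun _ _ _ => by positivity)
    have h4 : (0 : ℝ) ≤ (N1 : ℝ) := Nat.cast_nonneg _
    calc ((N1 : ℝ)) ^ 2 ≤ (∑ a ∈ A, ‖f a‖) ^ 2 := by
          apply pow_le_pow_left₀ h4 h1
      _ ≤ (A.card : ℝ) * ∑ a ∈ A, ‖f a‖ ^ 2 := h2
      _ ≤ (A.card : ℝ) * ((p : ℝ) * B.card) := by
          refine le_trans (mul_le_mul_of_nonneg_left h3 (Nat.cast_nonneg _)) ?_
          exact mul_le_mul_of_nonneg_left hnormsum (Nat.cast_nonneg _)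
  -- final arithmetic
  by_contra hcon
  push_neg at hcon
  have hxy4p : 4 * (p : ℝ) ≤ (A.card : ℝ) * B.card := by exact_mod_cast hcon
  have hp2' : (2 : ℝ) ≤ (p : ℝ) := by exact_mod_cast hp2
  have hsplit' : (N1 : ℝ) + (N0 : ℝ) = (A.card : ℝ) * B.card := by exact_mod_cast hsplit
  have hN0sq : ((N0 : ℝ)) ^ 2 ≤ (A.card : ℝ) * B.card := by
    have h1 : (N0 : ℝ) ≤ (A.card : ℝ) := by exact_mod_cast hN0A
    have h2 : (N0 : ℝ) ≤ (B.card : ℝ) := by exact_mod_cast hN0B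
    have h3 : (0 : ℝ) ≤ (N0 : ℝ) := Nat.cast_nonneg _
    nlinarith
  have hN1' : ((N1 : ℝ)) ^ 2 ≤ (A.card : ℝ) * ((p : ℝ) * B.card) := hCS
  have hN1nn : (0 : ℝ) ≤ (N1 : ℝ) := Nat.cast_nonneg _
  have hN0nn : (0 : ℝ) ≤ (N0 : ℝ) := Nat.cast_nonneg _
  nlinarith [sq_nonneg ((N1 : ℝ) - (N0 : ℝ)), sq_nonneg ((N1 : ℝ) + (N0 : ℝ) - 4),
    mul_nonneg hN1nn hN0nn, sq_nonneg ((A.card : ℝ) * B.card)]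
end

section
/- Let X be a finite set with |X| = n, let δ ∈ (0,1], and let A_1, …, A_m ⊆ X be subsets with |A_j| ≥ δn for every j ∈ [m]. If m ≥ 2/δ, then there exist indices i ≠ j such that |A_i ∩ A_j| ≥ δ^2 n / 2. -/
open Finset

theorem stmt_15 {X : Type*} [Fintype X] [DecidableEq X] (n : ℕ)
    (hn : Fintype.card X = n) (δ : ℝ) (hδ0 : 0 < δ) (hδ1 : δ ≤ 1)
    (m : ℕ) (A : Fin m → Finset X)
    (hA : ∀ j, δ * n ≤ ((A j).card : ℝ))
    (hm : 2 / δ ≤ (m : ℝ)) :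
    ∃ i j : Fin m, i ≠ j ∧ δ ^ 2 * n / 2 ≤ ((A i ∩ A j).card : ℝ) := by
  by_contra hcon
  push_neg at hcon
  have hδm : 2 ≤ δ * m := by
    rw [div_le_iff₀ hδ0] at hm
    linarith [hm]
  have hm2 : 2 ≤ m := by
    have h2 : (2:ℝ) ≤ (m:ℝ) := by nlinarith
    exact_mod_cast h2
  have i0 : Fin m := ⟨0, by omega⟩
  have i1 : Fin m := ⟨1, by omega⟩
  rcases Nat.eq_zero_or_pos n with hn0 | hn1
  · have h := hcon ⟨0, by omega⟩ ⟨1, by omega⟩ (by simp [Fin.ext_iff])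
    rw [hn0] at h
    push_cast at h
    have h0 : (0:ℝ) ≤ ((A ⟨0, by omega⟩ ∩ A ⟨1, by omega⟩).card : ℝ) := Nat.cast_nonneg _
    linarith
  -- main case: n ≥ 1
  set d : X → ℕ := fun x => (univ.filter (fun j => x ∈ A j)).card with hd
  have key1 : ∑ x : X, d x = ∑ j, (A j).card := by
    simp only [hd, Finset.card_filter]
    rw [Finset.sum_comm]
    congr 1; ext j
    rw [Finset.card_eq_sum_ones, ← Finset.sum_filter]
    congr 1
    simp
  have key2 : ∑ p ∈ (univ : Finset (Fin m)).offDiag, (A p.1 ∩ A p.2).card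
      = ∑ x : X, (d x * (d x - 1)) := by
    have h1 : ∀ p : Fin m × Fin m, (A p.1 ∩ A p.2).card
        = ∑ x : X, if x ∈ A p.1 ∧ x ∈ A p.2 then 1 else 0 := by
      intro p
      rw [Finset.card_eq_sum_ones, ← Finset.sum_filter]
      congr 1
      ext x
      simp [Finset.mem_inter]
    simp only [h1]
    rw [Finset.sum_comm]
    congr 1; ext x
    rw [← Finset.card_filter]
    have h2 : ((univ : Finset (Fin m)).offDiag.filter (fun p => x ∈ A p.1 ∧ x ∈ A p.2))
        = (univ.filter (fun j => x ∈ A j)).offDiag := by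
      ext p
      simp [Finset.mem_offDiag, and_comm, and_assoc]
      tauto
    rw [h2, Finset.offDiag_card]
    rw [Nat.mul_sub, Nat.mul_one]
  set D : ℝ := ∑ x : X, (d x : ℝ) with hD
  set Q : ℝ := ∑ x : X, (d x : ℝ)^2 with hQ
  have hDlb : δ * m * n ≤ D := by
    have h1 : δ * n * m ≤ ∑ j, ((A j).card : ℝ) := by
      calc δ * n * m = ∑ _j : Fin m, δ * n := by
            rw [Finset.sum_const, card_univ, Fintype.card_fin]; ring
        _ ≤ ∑ j, ((A j).card : ℝ) := Finset.sum_le_sum fun j _ => hA j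
    have h2 : D = ∑ j, ((A j).card : ℝ) := by
      rw [hD]
      rw [← Nat.cast_sum, key1, Nat.cast_sum]
    rw [h2]; linarith
  have hCS : D ^ 2 ≤ (n : ℝ) * Q := by
    have h := sq_sum_le_card_mul_sum_sq (s := (univ : Finset X))
      (f := fun x => (d x : ℝ))
    simpa [card_univ, hn] using h
  have hcast : ∀ x : X, ((d x * (d x - 1) : ℕ) : ℝ) = (d x : ℝ)^2 - (d x : ℝ) := by
    intro x
    rcases Nat.eq_zero_or_pos (d x) with h | h
    · simp [h]
    · rw [Nat.mul_sub, Nat.mul_one, Nat.cast_sub (Nat.le_mul_of_pos_left _ h)]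
      push_cast; ring
  have hT : ((∑ p ∈ (univ : Finset (Fin m)).offDiag, (A p.1 ∩ A p.2).card : ℕ) : ℝ)
      = Q - D := by
    rw [key2, Nat.cast_sum]
    rw [hQ, hD, ← Finset.sum_sub_distrib]
    exact Finset.sum_congr rfl fun x _ => hcast x
  have hoffne : ((univ : Finset (Fin m)).offDiag).Nonempty := by
    refine ⟨(⟨0, by omega⟩, ⟨1, by omega⟩), ?_⟩
    simp [Finset.mem_offDiag, Fin.ext_iff]
  have hlt : Q - D < (m * m - m : ℝ) * (δ ^ 2 * n / 2) := by
    rw [← hT]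
    have h1 : ((∑ p ∈ (univ : Finset (Fin m)).offDiag, (A p.1 ∩ A p.2).card : ℕ) : ℝ)
        = ∑ p ∈ (univ : Finset (Fin m)).offDiag, ((A p.1 ∩ A p.2).card : ℝ) := by
      push_cast; ring
    rw [h1]
    have h2 : ∑ p ∈ (univ : Finset (Fin m)).offDiag, ((A p.1 ∩ A p.2).card : ℝ)
        < ∑ _p ∈ (univ : Finset (Fin m)).offDiag, (δ ^ 2 * n / 2) := by
      refine Finset.sum_lt_sum_of_nonempty hoffne fun p hp => ?_
      have hp' := Finset.mem_offDiag.mp hp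
      exact hcon p.1 p.2 hp'.2.2
    rw [Finset.sum_const, Finset.offDiag_card, card_univ, Fintype.card_fin] at h2
    have h3 : ((m * m - m : ℕ) : ℝ) = (m : ℝ) * m - m := by
      have : m ≤ m * m := Nat.le_mul_of_pos_left _ (by omega)
      push_cast [Nat.cast_sub this]
      ring
    rw [nsmul_eq_mul, h3] at h2
    exact h2
  -- final contradiction
  have hnR : (1 : ℝ) ≤ n := by exact_mod_cast hn1
  have hmR : (2 : ℝ) ≤ m := by exact_mod_cast hm2
  have hDn : (n : ℝ) ≤ D := by nlinarith
  have hprod : 0 ≤ (D - δ * m * n) * (D - n) := by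
    apply mul_nonneg <;> linarith
  have h4 : (0:ℝ) ≤ δ * m + δ - 2 := by nlinarith
  have hnpos : (0:ℝ) < n := by linarith
  have hlt2 : (n:ℝ) * (Q - D) < (n:ℝ) * ((m * m - m : ℝ) * (δ ^ 2 * n / 2)) :=
    mul_lt_mul_of_pos_left hlt hnpos
  nlinarith [hCS, hprod, hlt2,
    mul_nonneg (by positivity : (0:ℝ) ≤ δ * m * n) (sub_nonneg.2 hDlb),
    mul_nonneg (mul_nonneg (mul_nonneg hδ0.le h4) (by positivity : (0:ℝ) ≤ (m:ℝ))) (sq_nonneg (n:ℝ))]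
end

section
/- There is an absolute constant K > 0 such that for every prime p and all sets A ⊆ F_p and P ⊆ F_p^* one has ( Σ_{x∈P} (A∘A)(x) )^4 ≤ K · T(A) · |A|^2 · min{ |P·P|, |P/P| }, where P·P = {p₁p₂ : p₁, p₂ ∈ P} and P/P = {p₁p₂^{−1} : p₁, p₂ ∈ P}. -/
open Finset Pointwise

/-- `(X∘Y)(x) = #{(a,b) ∈ X×Y : b − a = x}`. -/
def conv {p : ℕ} (X Y : Finset (ZMod p)) (x : ZMod p) : ℕ :=
  ((X ×ˢ Y).filter fun ab => ab.2 - ab.1 = x).card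

/-- Multiplicative energy `E^×(X,Y)`. -/
def mulE {p : ℕ} (X Y : Finset (ZMod p)) : ℕ :=
  (((X ×ˢ X) ×ˢ Y ×ˢ Y).filter fun t => t.1.1 * t.2.1 = t.1.2 * t.2.2).card

/-- `T(A,B,C,D) = Σ_{c∈C, d∈D} E^×(A−c, B−d)`. -/
def trip {p : ℕ} (A B C D : Finset (ZMod p)) : ℕ :=
  ∑ c ∈ C, ∑ d ∈ D, mulE (A.image (· - c)) (B.image (· - d))

namespace Stmt19Aux

/-- Counting pairs with matching labels, fiberwise. -/
lemma mixed_fiber {α β : Type*} [DecidableEq α] [DecidableEq β] (s : Finset α) (f g : α → β) :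
    ((s ×ˢ s).filter fun q => f q.1 = g q.2).card
      = ∑ t ∈ s.image f,
          (s.filter fun x => f x = t).card * (s.filter fun x => g x = t).card := by
  rw [Finset.card_eq_sum_card_fiberwise
    (f := fun q : α × α => f q.1) (t := s.image f)
    (fun q hq => by
      simp only [Finset.mem_coe, Finset.mem_filter, Finset.mem_product] at hq
      exact Finset.mem_image_of_mem f hq.1.1)]
  refine Finset.sum_congr rfl fun t ht => ?_
  rw [← Finset.card_product]
  congr 1
  ext q
  simp only [Finset.mem_filter, Finset.mem_product]
  constructor
  · rintro ⟨⟨⟨hq1, hq2⟩, heq⟩, hft⟩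
    exact ⟨⟨hq1, hft⟩, hq2, heq.symm.trans hft⟩
  · rintro ⟨⟨hq1, hft⟩, hq2, hgt⟩
    exact ⟨⟨⟨hq1, hq2⟩, hft.trans hgt.symm⟩, hft⟩

variable {p : ℕ}

/-- Pairs `(b,c)` with `b − a ∈ P` and `c − a' ∈ P`. -/
def Dset (A P : Finset (ZMod p)) (a a' : ZMod p) : Finset (ZMod p × ZMod p) :=
  (A ×ˢ A).filter fun bc => bc.1 - a ∈ P ∧ bc.2 - a' ∈ P

/-- Triples `(a,b,b')` with `b − a ∈ P` and `b' − a ∈ P`. -/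
def Tset (A P : Finset (ZMod p)) : Finset (ZMod p × ZMod p × ZMod p) :=
  (A ×ˢ A ×ˢ A).filter fun t => t.2.1 - t.1 ∈ P ∧ t.2.2 - t.1 ∈ P

def lam1 (a a' : ZMod p) (bc : ZMod p × ZMod p) : ZMod p := (bc.1 - a) * (bc.2 - a')⁻¹
def lam2 (a a' : ZMod p) (bc : ZMod p × ZMod p) : ZMod p := (bc.2 - a') * (bc.1 - a)⁻¹

/-- Key injection: pairs in `Dset × Dset` with equal `lam1`-labels inject into the
multiplicative energy of `A − a` and `A − a'`. -/
lemma key_bound [Fact p.Prime] (A P : Finset (ZMod p)) (hP : (0 : ZMod p) ∉ P) (a a' : ZMod p) :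
    (((Dset A P a a') ×ˢ (Dset A P a a')).filter fun q => lam1 a a' q.1 = lam1 a a' q.2).card
      ≤ mulE (A.image (· - a)) (A.image (· - a')) := by
  unfold mulE
  apply Finset.card_le_card_of_injOn
    (fun q => ((q.1.1 - a, q.2.1 - a), (q.2.2 - a', q.1.2 - a')))
  · rintro ⟨⟨b, c⟩, ⟨b₂, c₂⟩⟩ hq
    simp only [Finset.mem_coe, Finset.mem_filter, Finset.mem_product] at hq
    simp only [Dset, lam1, Finset.mem_filter, Finset.mem_product] at hq
    obtain ⟨⟨⟨⟨hb, hc⟩, hbP, hcP⟩, ⟨hb₂, hc₂⟩, hb₂P, hc₂P⟩, heq⟩ := hq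
    have hc0 : c - a' ≠ 0 := fun h => hP (h ▸ hcP)
    have hc₂0 : c₂ - a' ≠ 0 := fun h => hP (h ▸ hc₂P)
    simp only [Finset.mem_coe, Finset.mem_filter, Finset.mem_product, Finset.mem_image]
    refine ⟨⟨⟨⟨b, hb, rfl⟩, ⟨b₂, hb₂, rfl⟩⟩, ⟨c₂, hc₂, rfl⟩, ⟨c, hc, rfl⟩⟩, ?_⟩
    field_simp at heq
    linear_combination heq
  · rintro ⟨⟨b, c⟩, ⟨b₂, c₂⟩⟩ _ ⟨⟨b', c'⟩, ⟨b₂', c₂'⟩⟩ _ h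
    simp only [Prod.mk.injEq] at h
    obtain ⟨⟨h1, h2⟩, h3, h4⟩ := h
    simp only [Prod.mk.injEq]
    exact ⟨⟨sub_left_inj.mp h1, sub_left_inj.mp h4⟩, sub_left_inj.mp h2, sub_left_inj.mp h3⟩

lemma lam2_eq_lam1_inv [Fact p.Prime] (a a' : ZMod p) (z : ZMod p × ZMod p) :
    lam2 a a' z = (lam1 a a' z)⁻¹ := by
  simp [lam1, lam2, mul_inv_rev, mul_comm]

/-- Cauchy–Schwarz step for the product labelling. -/
lemma prod_pair_bound [Fact p.Prime] (A P : Finset (ZMod p)) (hP : (0 : ZMod p) ∉ P)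
    (a a' : ZMod p) :
    (((Dset A P a a') ×ˢ (Dset A P a a')).filter fun q => lam1 a a' q.1 = lam2 a a' q.2).card
      ≤ mulE (A.image (· - a)) (A.image (· - a')) := by
  set D := Dset A P a a' with hD
  set E := mulE (A.image (· - a)) (A.image (· - a')) with hE
  set n₁ : ZMod p → ℕ := fun t => (D.filter fun x => lam1 a a' x = t).card with hn₁
  set n₂ : ZMod p → ℕ := fun t => (D.filter fun x => lam2 a a' x = t).card with hn₂
  rw [mixed_fiber]
  have h₁ : ∑ t ∈ D.image (lam1 a a'), n₁ t * n₁ t ≤ E := by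
    rw [← mixed_fiber]; exact key_bound A P hP a a'
  have h₂ : ∑ t ∈ D.image (lam2 a a'), n₂ t * n₂ t ≤ E := by
    rw [← mixed_fiber]
    have : ((D ×ˢ D).filter fun q => lam2 a a' q.1 = lam2 a a' q.2)
        = ((D ×ˢ D).filter fun q => lam1 a a' q.1 = lam1 a a' q.2) := by
      apply Finset.filter_congr
      intro q _
      simp only [lam2_eq_lam1_inv, inv_inj]
    rw [this]; exact key_bound A P hP a a'
  have hzero : ∀ t ∉ D.image (lam2 a a'), n₂ t = 0 := by
    intro t ht
    simp only [hn₂, Finset.card_eq_zero, Finset.filter_eq_empty_iff]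
    intro x hx h
    exact ht (Finset.mem_image.mpr ⟨x, hx, h⟩)
  have h₂' : ∑ t ∈ D.image (lam1 a a'), n₂ t * n₂ t ≤ E := by
    calc ∑ t ∈ D.image (lam1 a a'), n₂ t * n₂ t
        ≤ ∑ t ∈ D.image (lam1 a a') ∪ D.image (lam2 a a'), n₂ t * n₂ t :=
          Finset.sum_le_sum_of_subset Finset.subset_union_left
      _ = ∑ t ∈ D.image (lam2 a a'), n₂ t * n₂ t := by
          refine (Finset.sum_subset Finset.subset_union_right fun x _ hx => ?_).symm
          simp [hzero x hx]
      _ ≤ E := h₂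
  have cs := Finset.sum_mul_sq_le_sq_mul_sq (D.image (lam1 a a')) n₁ n₂
  have hsq : (∑ t ∈ D.image (lam1 a a'), n₁ t * n₂ t) ^ 2 ≤ E ^ 2 := by
    calc (∑ t ∈ D.image (lam1 a a'), n₁ t * n₂ t) ^ 2
        ≤ (∑ t ∈ D.image (lam1 a a'), n₁ t ^ 2) * ∑ t ∈ D.image (lam1 a a'), n₂ t ^ 2 := cs
      _ ≤ E * E := by
          apply Nat.mul_le_mul
          · simpa [pow_two] using h₁
          · simpa [pow_two] using h₂'
      _ = E ^ 2 := (pow_two E).symm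
  exact (Nat.pow_le_pow_iff_left two_ne_zero).mp hsq

/-- The fibre of the matching-label pair set over a fixed base pair `(a, a')` is in bijection
with the corresponding pair set over `Dset`. -/
lemma fiber_card (A P : Finset (ZMod p)) (ℓ : ZMod p × ZMod p × ZMod p → ZMod p)
    (ρ : ZMod p × ZMod p → ZMod p × ZMod p → Prop) [∀ x y, Decidable (ρ x y)]
    (a a' : ZMod p) (ha : a ∈ A) (ha' : a' ∈ A)
    (hiff : ∀ b b' c c', b ∈ A → b' ∈ A → c ∈ A → c' ∈ A →
      b - a ∈ P → b' - a ∈ P → c - a' ∈ P → c' - a' ∈ P →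
      (ℓ (a, b, b') = ℓ (a', c, c') ↔ ρ (b, c) (b', c'))) :
    ((((Tset A P) ×ˢ (Tset A P)).filter fun w => ℓ w.1 = ℓ w.2).filter
        fun w => (w.1.1, w.2.1) = (a, a')).card
      = (((Dset A P a a') ×ˢ (Dset A P a a')).filter fun q => ρ q.1 q.2).card := by
  apply Finset.card_nbij' (i := fun w => ((w.1.2.1, w.2.2.1), (w.1.2.2, w.2.2.2)))
    (j := fun q => ((a, q.1.1, q.2.1), (a', q.1.2, q.2.2)))
  · rintro ⟨⟨a₁, b, b'⟩, ⟨a₂, c, c'⟩⟩ hw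
    simp only [Finset.mem_coe, Tset, Dset, Finset.mem_filter, Finset.mem_product, Prod.mk.injEq] at hw ⊢
    obtain ⟨⟨⟨⟨⟨ha₁, hb, hb'⟩, hbP, hb'P⟩, ⟨ha₂, hc, hc'⟩, hcP, hc'P⟩, hl⟩, h1, h2⟩ := hw
    subst h1; subst h2
    exact ⟨⟨⟨⟨hb, hc⟩, hbP, hcP⟩, ⟨hb', hc'⟩, hb'P, hc'P⟩,
      (hiff b b' c c' hb hb' hc hc' hbP hb'P hcP hc'P).mp hl⟩
  · rintro ⟨⟨b, c⟩, ⟨b', c'⟩⟩ hq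
    simp only [Finset.mem_coe, Tset, Dset, Finset.mem_filter, Finset.mem_product, Prod.mk.injEq] at hq ⊢
    obtain ⟨⟨⟨⟨hb, hc⟩, hbP, hcP⟩, ⟨hb', hc'⟩, hb'P, hc'P⟩, hρ⟩ := hq
    exact ⟨⟨⟨⟨⟨ha, hb, hb'⟩, hbP, hb'P⟩, ⟨ha', hc, hc'⟩, hcP, hc'P⟩,
      (hiff b b' c c' hb hb' hc hc' hbP hb'P hcP hc'P).mpr hρ⟩, trivial, trivial⟩
  · rintro ⟨⟨a₁, b, b'⟩, ⟨a₂, c, c'⟩⟩ hw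
    simp only [Finset.mem_coe, Finset.mem_filter, Prod.mk.injEq] at hw
    obtain ⟨-, h1, h2⟩ := hw
    simp [h1, h2]
  · rintro ⟨⟨b, c⟩, ⟨b', c'⟩⟩ _
    rfl

/-- Summing the fibre bounds over all base pairs gives `trip`. -/
lemma W_le_trip (A P : Finset (ZMod p)) (ℓ : ZMod p × ZMod p × ZMod p → ZMod p)
    (hb : ∀ a a', a ∈ A → a' ∈ A →
      ((((Tset A P) ×ˢ (Tset A P)).filter fun w => ℓ w.1 = ℓ w.2).filter
        fun w => (w.1.1, w.2.1) = (a, a')).card ≤ mulE (A.image (· - a)) (A.image (· - a'))) :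
    (((Tset A P) ×ˢ (Tset A P)).filter fun w => ℓ w.1 = ℓ w.2).card ≤ trip A A A A := by
  have hmem : ∀ w ∈ ((Tset A P) ×ˢ (Tset A P)).filter fun w => ℓ w.1 = ℓ w.2,
      (w.1.1, w.2.1) ∈ A ×ˢ A := by
    rintro ⟨w1, w2⟩ hw
    simp only [Tset, Finset.mem_filter, Finset.mem_product] at hw ⊢
    exact ⟨hw.1.1.1.1, hw.1.2.1.1⟩
  rw [Finset.card_eq_sum_card_fiberwise hmem, trip, ← Finset.sum_product']
  apply Finset.sum_le_sum
  rintro ⟨a, a'⟩ hx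
  simp only [Finset.mem_product] at hx
  exact hb a a' hx.1 hx.2

lemma conv_sum (A P : Finset (ZMod p)) :
    ∑ x ∈ P, conv A A x = ((A ×ˢ A).filter fun ab => ab.2 - ab.1 ∈ P).card := by
  have hmem : ∀ x ∈ (A ×ˢ A).filter fun ab : ZMod p × ZMod p => ab.2 - ab.1 ∈ P,
      x.2 - x.1 ∈ P := fun x hx => (Finset.mem_filter.mp hx).2
  rw [Finset.card_eq_sum_card_fiberwise hmem]
  refine Finset.sum_congr rfl fun x hx => ?_
  unfold conv
  congr 1
  ext ab
  simp only [Finset.mem_filter, Finset.mem_product]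
  constructor
  · rintro ⟨⟨h1, h2⟩, h3⟩
    exact ⟨⟨⟨h1, h2⟩, h3 ▸ hx⟩, h3⟩
  · rintro ⟨⟨⟨h1, h2⟩, -⟩, h3⟩
    exact ⟨⟨h1, h2⟩, h3⟩

lemma first_cs (A P : Finset (ZMod p)) :
    (((A ×ˢ A).filter fun ab => ab.2 - ab.1 ∈ P).card) ^ 2 ≤ A.card * (Tset A P).card := by
  have h1 : ((A ×ˢ A).filter fun ab : ZMod p × ZMod p => ab.2 - ab.1 ∈ P).card
      = ∑ a ∈ A, (((A ×ˢ A).filter fun ab : ZMod p × ZMod p => ab.2 - ab.1 ∈ P).filter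
          fun ab => ab.1 = a).card := by
    apply Finset.card_eq_sum_card_fiberwise
    intro x hx
    simp only [Finset.mem_coe, Finset.mem_filter, Finset.mem_product] at hx
    exact hx.1.1
  have h2 : (Tset A P).card
      = ∑ a ∈ A, ((((A ×ˢ A).filter fun ab : ZMod p × ZMod p => ab.2 - ab.1 ∈ P).filter
            fun ab => ab.1 = a).card
          * (((A ×ˢ A).filter fun ab : ZMod p × ZMod p => ab.2 - ab.1 ∈ P).filter
            fun ab => ab.1 = a).card) := by
    rw [Finset.card_eq_sum_card_fiberwise (f := fun t => t.1) (t := A)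
      (fun x hx => by
        simp only [Finset.mem_coe, Tset, Finset.mem_filter, Finset.mem_product] at hx
        exact hx.1.1)]
    refine Finset.sum_congr rfl fun a ha => ?_
    rw [← Finset.card_product]
    apply Finset.card_nbij' (i := fun t => ((t.1, t.2.1), (t.1, t.2.2)))
      (j := fun q => (a, q.1.2, q.2.2))
    · rintro ⟨a₁, b, b'⟩ ht
      simp only [Finset.mem_coe, Tset, Finset.mem_filter, Finset.mem_product] at ht ⊢
      obtain ⟨⟨⟨ha₁, hb, hb'⟩, hbP, hb'P⟩, h⟩ := ht
      subst h
      refine ⟨⟨⟨⟨ha₁, hb⟩, hbP⟩, ?_⟩, ⟨⟨ha₁, hb'⟩, hb'P⟩, ?_⟩ <;> trivial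
    · rintro ⟨⟨a₁, b⟩, ⟨a₂, b'⟩⟩ hq
      simp only [Finset.mem_coe, Finset.mem_filter, Finset.mem_product] at hq
      obtain ⟨⟨⟨⟨ha₁, hb⟩, hbP⟩, e1⟩, ⟨⟨ha₂, hb'⟩, hb'P⟩, e2⟩ := hq
      simp only [Finset.mem_coe, Tset, Finset.mem_filter, Finset.mem_product] at e1 e2 ⊢
      subst e1; subst e2
      refine ⟨⟨⟨ha, hb, hb'⟩, hbP, hb'P⟩, ?_⟩
      trivial
    · rintro ⟨a₁, b, b'⟩ ht
      simp only [Finset.mem_coe, Finset.mem_filter] at ht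
      simp [ht.2]
    · rintro ⟨⟨a₁, b⟩, ⟨a₂, b'⟩⟩ hq
      simp only [Finset.mem_coe, Finset.mem_filter, Finset.mem_product] at hq
      obtain ⟨⟨-, e1⟩, -, e2⟩ := hq
      simp [e1, e2]
  rw [h1, h2]
  simpa [pow_two] using sq_sum_le_card_mul_sum_sq
    (s := A) (f := fun a => ((((A ×ˢ A).filter fun ab : ZMod p × ZMod p => ab.2 - ab.1 ∈ P).filter
      fun ab => ab.1 = a).card : ℕ))

lemma label_cs (A P Q : Finset (ZMod p)) (ℓ : ZMod p × ZMod p × ZMod p → ZMod p)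
    (hℓ : ∀ t ∈ Tset A P, ℓ t ∈ Q)
    (hW : (((Tset A P) ×ˢ Tset A P).filter fun w => ℓ w.1 = ℓ w.2).card ≤ trip A A A A) :
    (Tset A P).card ^ 2 ≤ Q.card * trip A A A A := by
  rw [Finset.card_eq_sum_card_fiberwise (f := ℓ) (t := (Tset A P).image ℓ)
    (fun x hx => Finset.mem_image_of_mem ℓ hx)]
  calc (∑ t ∈ (Tset A P).image ℓ, ((Tset A P).filter fun x => ℓ x = t).card) ^ 2
      ≤ ((Tset A P).image ℓ).card
          * ∑ t ∈ (Tset A P).image ℓ, ((Tset A P).filter fun x => ℓ x = t).card ^ 2 :=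
        sq_sum_le_card_mul_sum_sq
    _ ≤ Q.card * ∑ t ∈ (Tset A P).image ℓ, ((Tset A P).filter fun x => ℓ x = t).card ^ 2 := by
        apply Nat.mul_le_mul_right
        apply Finset.card_le_card
        intro x hx
        obtain ⟨t, ht, rfl⟩ := Finset.mem_image.mp hx
        exact hℓ t ht
    _ = Q.card * (((Tset A P) ×ˢ Tset A P).filter fun w => ℓ w.1 = ℓ w.2).card := by
        rw [mixed_fiber]
        simp [pow_two]
    _ ≤ Q.card * trip A A A A := Nat.mul_le_mul_left _ hW

/-- Ratio labelling: `T² ≤ |P/P| · trip`. -/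
lemma ratio_bound [Fact p.Prime] (A P : Finset (ZMod p)) (hP : (0 : ZMod p) ∉ P) :
    (Tset A P).card ^ 2 ≤ (P / P).card * trip A A A A := by
  set ℓ : ZMod p × ZMod p × ZMod p → ZMod p := fun t => (t.2.1 - t.1) / (t.2.2 - t.1) with hℓdef
  apply label_cs A P (P / P) ℓ
  · intro t ht
    simp only [Tset, Finset.mem_filter, Finset.mem_product] at ht
    exact Finset.div_mem_div ht.2.1 ht.2.2
  · apply W_le_trip
    intro a a' ha ha'
    rw [fiber_card A P ℓ (fun q q' => lam1 a a' q = lam1 a a' q') a a' ha ha'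
      (fun b b' c c' hb hb' hc hc' hbP hb'P hcP hc'P => by
        have h1 : b' - a ≠ 0 := fun h => hP (h ▸ hb'P)
        have h2 : c - a' ≠ 0 := fun h => hP (h ▸ hcP)
        have h3 : c' - a' ≠ 0 := fun h => hP (h ▸ hc'P)
        simp only [hℓdef, lam1]
        constructor <;> intro h <;> field_simp at h ⊢ <;> linear_combination h)]
    exact key_bound A P hP a a'

/-- Product labelling: `T² ≤ |P·P| · trip`. -/
lemma product_bound [Fact p.Prime] (A P : Finset (ZMod p)) (hP : (0 : ZMod p) ∉ P) :
    (Tset A P).card ^ 2 ≤ (P * P).card * trip A A A A := by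
  set ℓ : ZMod p × ZMod p × ZMod p → ZMod p := fun t => (t.2.1 - t.1) * (t.2.2 - t.1) with hℓdef
  apply label_cs A P (P * P) ℓ
  · intro t ht
    simp only [Tset, Finset.mem_filter, Finset.mem_product] at ht
    exact Finset.mul_mem_mul ht.2.1 ht.2.2
  · apply W_le_trip
    intro a a' ha ha'
    rw [fiber_card A P ℓ (fun q q' => lam1 a a' q = lam2 a a' q') a a' ha ha'
      (fun b b' c c' hb hb' hc hc' hbP hb'P hcP hc'P => by
        have h0 : b - a ≠ 0 := fun h => hP (h ▸ hbP)
        have h1 : b' - a ≠ 0 := fun h => hP (h ▸ hb'P)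
        have h2 : c - a' ≠ 0 := fun h => hP (h ▸ hcP)
        have h3 : c' - a' ≠ 0 := fun h => hP (h ▸ hc'P)
        simp only [hℓdef, lam1, lam2]
        constructor <;> intro h <;> field_simp at h ⊢ <;> linear_combination h)]
    exact prod_pair_bound A P hP a a'

lemma main_nat [Fact p.Prime] (A P : Finset (ZMod p)) (hP : (0 : ZMod p) ∉ P) :
    (∑ x ∈ P, conv A A x) ^ 4
      ≤ trip A A A A * A.card ^ 2 * min (P * P).card (P / P).card := by
  have hmin : (Tset A P).card ^ 2 ≤ min (P * P).card (P / P).card * trip A A A A := by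
    rcases le_total ((P * P).card) ((P / P).card) with h | h
    · rw [min_eq_left h]; exact product_bound A P hP
    · rw [min_eq_right h]; exact ratio_bound A P hP
  calc (∑ x ∈ P, conv A A x) ^ 4
      = (((A ×ˢ A).filter fun ab => ab.2 - ab.1 ∈ P).card ^ 2) ^ 2 := by
        rw [conv_sum A P]; ring
    _ ≤ (A.card * (Tset A P).card) ^ 2 :=
        Nat.pow_le_pow_left (first_cs A P) 2
    _ = A.card ^ 2 * (Tset A P).card ^ 2 := by ring
    _ ≤ A.card ^ 2 * (min (P * P).card (P / P).card * trip A A A A) :=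
        Nat.mul_le_mul_left _ hmin
    _ = trip A A A A * A.card ^ 2 * min (P * P).card (P / P).card := by ring

end Stmt19Aux

theorem stmt_19 :
    ∃ K : ℝ, 0 < K ∧ ∀ (p : ℕ) [Fact p.Prime],
      ∀ (A P : Finset (ZMod p)), (0 : ZMod p) ∉ P →
        (∑ x ∈ P, (conv A A x : ℝ)) ^ 4 ≤
          K * (trip A A A A : ℝ) * (A.card : ℝ) ^ 2 *
            (min (P * P).card (P / P).card : ℝ) := by
  refine ⟨1, one_pos, ?_⟩
  intro p _ A P hP
  have h := Stmt19Aux.main_nat A P hP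
  rw [one_mul]
  exact_mod_cast h
end
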